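/- The map δ : F·1 ⊕ (K3⊗K3) → F·1 ⊕ (K3⊗K3) defined by δ(1) = 1 and δ(a⊗b) = (-1)^{|a||b|} b⊗a on homogeneous tensors is an automorphism of the superalgebra F·1 ⊕ (K3⊗K3) (i.e., of K10). -/
import Mathlib


open scoped BigOperators

namespace KJ
variable (F : Type*) [Field F]

/-- Kaplansky superalgebra `K3`: basis `0 = e` (even), `1 = x`, `2 = y` (odd). -/
def x0 : Fin 3 → F := Pi.single 0 1
def x1 : Fin 3 → F := Pi.single 1 1
def x2 : Fin 3 → F := Pi.single 2 1

/-- Multiplication table of `K3`. -/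
def T3 : Fin 3 → Fin 3 → Fin 3 → F :=
  ![![x0 F, (2:F)⁻¹ • x1 F, (2:F)⁻¹ • x2 F],
    ![(2:F)⁻¹ • x1 F, 0, x0 F],
    ![(2:F)⁻¹ • x2 F, -(x0 F), 0]]

/-- Product of `K3`, extended bilinearly from the table. -/
def mul3 (u v : Fin 3 → F) : Fin 3 → F := ∑ i, ∑ j, (u i * v j) • T3 F i j

/-- Parity of the basis elements of `K3`. -/
def p3 : Fin 3 → ZMod 2 := ![0, 1, 1]

/-- The sign `(-1)^a` for `a : ZMod 2`. -/
def sg : ZMod 2 → F := fun a => if a = 0 then 1 else -1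

/-- Projection onto the even part of `K3`. -/
def evenP3 (u : Fin 3 → F) : Fin 3 → F := fun i => if p3 i = 0 then u i else 0

/-- An element of `K3` is homogeneous of degree `α`. -/
def IsHom3 (u : Fin 3 → F) (α : ZMod 2) : Prop := ∀ i, p3 i ≠ α → u i = 0

end KJ
namespace KJ
variable (F : Type*) [Field F]

/-- The supersymmetric bilinear form on `K3`: `(e|e) = 1/2`, `(x|y) = 1 = -(y|x)`. -/
def kap : Fin 3 → Fin 3 → F := ![![(2:F)⁻¹, 0, 0], ![0, 0, 1], ![0, -1, 0]]

/-- Coordinates of an element of `K3 ⊗ K3`. -/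
abbrev Mat (F : Type*) := Fin 3 → Fin 3 → F

/-- The Benkart-Elduque product on `F·1 ⊕ (K3 ⊗ K3)`:
`(a⊗b)(c⊗d) = (-1)^{|b||c|} (ac ⊗ bd - (3/4)(a|c)(b|d)·1)`, `1` being the identity. -/
def mulBE (u v : F × Mat F) : F × Mat F :=
  ( u.1 * v.1 + ∑ i, ∑ j, ∑ k, ∑ l,
      u.2 i j * v.2 k l * sg F (p3 j * p3 k) * (-(3:F)/4 * kap F i k * kap F j l),
    fun r s => u.1 * v.2 r s + v.1 * u.2 r s +
      ∑ i, ∑ j, ∑ k, ∑ l,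
        u.2 i j * v.2 k l * sg F (p3 j * p3 k) * T3 F i k r * T3 F j l s )

/-- Homogeneity of degree `α` in `F·1 ⊕ (K3 ⊗ K3)`. -/
def IsHomBE (u : F × Mat F) (α : ZMod 2) : Prop :=
  (α = 1 → u.1 = 0) ∧ ∀ i j, p3 i + p3 j ≠ α → u.2 i j = 0

/-- Even elements of `F·1 ⊕ (K3 ⊗ K3)`. -/
def IsEvenBE (u : F × Mat F) : Prop := ∀ i j, p3 i + p3 j ≠ 0 → u.2 i j = 0

/-- Odd elements of `F·1 ⊕ (K3 ⊗ K3)`. -/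
def IsOddBE (u : F × Mat F) : Prop := u.1 = 0 ∧ ∀ i j, p3 i + p3 j ≠ 1 → u.2 i j = 0

end KJ
namespace KJ
variable (F : Type*) [Field F]

/-- The exchange map `δ : 1 ↦ 1`, `a⊗b ↦ (-1)^{|a||b|} b⊗a` on `F·1 ⊕ (K3 ⊗ K3)`. -/
def deltaBE (u : F × Mat F) : F × Mat F :=
  (u.1, fun i j => sg F (p3 i * p3 j) * u.2 j i)

end KJ
set_option maxHeartbeats 2000000 in
open KJ in
/-- The map `δ : λ1 + a⊗b ↦ λ1 + (-1)^{|a||b|} b⊗a` is an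
automorphism of the superalgebra `F·1 ⊕ (K3 ⊗ K3)` (i.e. of `K10`). -/
theorem delta_is_automorphism (F : Type*) [Field F]
    (h2 : (2:F) ≠ 0) (h3 : (3:F) ≠ 0) :
    (∀ (c : F) (u v : F × Mat F), deltaBE F (c • u + v) = c • deltaBE F u + deltaBE F v) ∧
    Function.Bijective (deltaBE F) ∧
    (∀ u v : F × Mat F, deltaBE F (mulBE F u v) = mulBE F (deltaBE F u) (deltaBE F v)) := by
  refine ⟨?_, ?_, ?_⟩
  · intro c u v
    simp only [deltaBE, Prod.smul_def, Prod.mk_add_mk, Prod.fst_add, Prod.snd_add, Prod.smul_fst,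
      Prod.smul_snd, Pi.add_apply, Pi.smul_apply, smul_eq_mul]
    refine Prod.ext rfl ?_
    funext i j
    simp only [Pi.add_apply, Pi.smul_apply, smul_eq_mul]
    ring
  · have hinv : Function.Involutive (deltaBE F) := by
      intro u
      refine Prod.ext rfl ?_
      funext i j
      show sg F (p3 i * p3 j) * (sg F (p3 j * p3 i) * u.2 i j) = u.2 i j
      rw [mul_comm (p3 j)]
      rcases eq_or_ne (p3 i * p3 j) 0 with h | h <;> simp [sg, h]
    exact hinv.bijective
  · intro u v
    refine Prod.ext ?_ ?_
    · show _ = _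
      simp only [deltaBE, mulBE, Fin.sum_univ_three, p3, sg, kap, x0, x1, x2, Matrix.cons_val_zero,
        Matrix.cons_val_one, Matrix.head_cons, Matrix.cons_val_two, Matrix.tail_cons]
      norm_num
      ring
    · funext r s
      show sg F (p3 r * p3 s) * _ = _
      simp only [deltaBE, mulBE, Fin.sum_univ_three, p3, sg, kap, T3, x0, x1, x2,
        Matrix.cons_val_zero, Matrix.cons_val_one, Matrix.head_cons, Matrix.cons_val_two,
        Matrix.tail_cons, Pi.smul_apply, Pi.zero_apply, Pi.neg_apply, smul_eq_mul, Pi.single_apply]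
      fin_cases r <;> fin_cases s <;> norm_num [Fin.ext_iff] <;> ring
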